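/- The product numerical range of an operator on a tensor product Hilbert space is a connected subset of the complex plane. -/

import Mathlib

open Matrix Complex Kronecker Pointwise

/-- The Kronecker (tensor) product of two vectors. -/
def prodVec {K M : ℕ} (x : Fin K → ℂ) (y : Fin M → ℂ) : Fin K × Fin M → ℂ :=
  fun p => x p.1 * y p.2

/-- The product numerical range of an operator on `ℂ^K ⊗ ℂ^M`. -/
def pnr {K M : ℕ} (X : Matrix (Fin K × Fin M) (Fin K × Fin M) ℂ) : Set ℂ :=
  {z | ∃ (x : Fin K → ℂ) (y : Fin M → ℂ),
    star x ⬝ᵥ x = 1 ∧ star y ⬝ᵥ y = 1 ∧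
    star (prodVec x y) ⬝ᵥ X.mulVec (prodVec x y) = z}

/-- The numerical range of an operator on `ℂ^N`. -/
def nr {N : ℕ} (A : Matrix (Fin N) (Fin N) ℂ) : Set ℂ :=
  {z | ∃ x : Fin N → ℂ, star x ⬝ᵥ x = 1 ∧ star x ⬝ᵥ A.mulVec x = z}

/-- Sphere membership in Euclidean space is equivalent to `star x ⬝ᵥ x = 1`. -/
lemma mem_sphere_iff_star_dot {n : ℕ} (x : EuclideanSpace ℂ (Fin n)) :
    x ∈ Metric.sphere (0 : EuclideanSpace ℂ (Fin n)) 1 ↔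
      star (x : Fin n → ℂ) ⬝ᵥ (x : Fin n → ℂ) = 1 := by
  have h1 : star (x : Fin n → ℂ) ⬝ᵥ (x : Fin n → ℂ) = inner ℂ x x := by
    rw [PiLp.inner_apply]
    simp only [dotProduct, Pi.star_apply, RCLike.inner_apply, RCLike.star_def, mul_comm]
  rw [h1, inner_self_eq_norm_sq_to_K, mem_sphere_iff_norm, sub_zero]
  constructor
  · rintro h; rw [h]; norm_num
  · intro h
    have : (‖x‖ : ℂ) ^ 2 = 1 := h
    have h2 : ‖x‖ ^ 2 = 1 := by exact_mod_cast this
    nlinarith [norm_nonneg x]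

/-- The unit sphere in `EuclideanSpace ℂ (Fin K)` is connected when `K > 0`. -/
lemma euclidean_sphere_isConnected {K : ℕ} (hK : 0 < K) :
    IsConnected (Metric.sphere (0 : EuclideanSpace ℂ (Fin K)) 1) := by
  apply isConnected_sphere ?_ 0 zero_le_one
  have h1 : Module.finrank ℝ (EuclideanSpace ℂ (Fin K)) = 2 * K := by
    rw [← Module.finrank_mul_finrank ℝ ℂ (EuclideanSpace ℂ (Fin K)),
      Complex.finrank_real_complex, finrank_euclideanSpace_fin]
  rw [← Module.finrank_eq_rank, h1]
  exact_mod_cast by omega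

theorem pnr_isConnected {K M : ℕ} (hK : 0 < K) (hM : 0 < M)
    (X : Matrix (Fin K × Fin M) (Fin K × Fin M) ℂ) :
    IsConnected (pnr X) := by
  classical
  set f : EuclideanSpace ℂ (Fin K) × EuclideanSpace ℂ (Fin M) → ℂ := fun p =>
    star (prodVec (p.1 : Fin K → ℂ) (p.2 : Fin M → ℂ)) ⬝ᵥ
      X.mulVec (prodVec (p.1 : Fin K → ℂ) (p.2 : Fin M → ℂ)) with hf
  have hcont : Continuous f := by
    have hc : ∀ (i : Fin K) (j : Fin M),
        Continuous (fun p : EuclideanSpace ℂ (Fin K) × EuclideanSpace ℂ (Fin M) =>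
          (p.1 : Fin K → ℂ) i * (p.2 : Fin M → ℂ) j) := by
      intro i j
      exact (((EuclideanSpace.proj i).continuous.comp continuous_fst)).mul
        ((EuclideanSpace.proj j).continuous.comp continuous_snd)
    simp only [hf, dotProduct, mulVec, prodVec, Pi.star_apply, RCLike.star_def]
    apply continuous_finset_sum
    intro q _
    exact (Complex.continuous_conj.comp (hc q.1 q.2)).mul
      (continuous_finset_sum _ fun r _ => continuous_const.mul (hc r.1 r.2))
  have himg : pnr X = f '' (Metric.sphere 0 1 ×ˢ Metric.sphere 0 1) := by
    ext z
    constructor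
    · rintro ⟨x, y, hx, hy, hz⟩
      exact ⟨(WithLp.toLp 2 x, WithLp.toLp 2 y), ⟨(mem_sphere_iff_star_dot (WithLp.toLp 2 x)).2 hx, (mem_sphere_iff_star_dot (WithLp.toLp 2 y)).2 hy⟩, hz⟩
    · rintro ⟨⟨x, y⟩, ⟨hx, hy⟩, hz⟩
      exact ⟨x, y, (mem_sphere_iff_star_dot x).1 hx, (mem_sphere_iff_star_dot y).1 hy, hz⟩
  rw [himg]
  exact ((euclidean_sphere_isConnected hK).prod (euclidean_sphere_isConnected hM)).image
    f hcont.continuousOn
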